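/- Assume d = 1/4 and e = 0 (with a, b ∈ ℝ arbitrary). Let u be a solution of the Longstaff–Schwartz equation on Ω, and let ε ∈ ℝ. Then the function w(x,y,t) = exp( ε·(4√y − tε)/2 ) · u( x, (2√y − tε)²/4, t ) satisfies the Longstaff–Schwartz equation at every point (x,y,t) ∈ Ω with 2√y > tε. -/

import Mathlib

/-- Partial derivative in `x`. -/
noncomputable def pdX (u : ℝ → ℝ → ℝ → ℝ) (x y t : ℝ) : ℝ := deriv (fun z => u z y t) x

/-- Partial derivative in `y`. -/
noncomputable def pdY (u : ℝ → ℝ → ℝ → ℝ) (x y t : ℝ) : ℝ := deriv (fun z => u x z t) y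

/-- Partial derivative in `t`. -/
noncomputable def pdT (u : ℝ → ℝ → ℝ → ℝ) (x y t : ℝ) : ℝ := deriv (fun z => u x y z) t

/-- Second partial derivative in `x`. -/
noncomputable def pdXX (u : ℝ → ℝ → ℝ → ℝ) (x y t : ℝ) : ℝ := deriv (fun z => pdX u z y t) x

/-- Second partial derivative in `y`. -/
noncomputable def pdYY (u : ℝ → ℝ → ℝ → ℝ) (x y t : ℝ) : ℝ := deriv (fun z => pdY u x z t) y

/-- The domain `Ω = {(x,y,t) : x > 0, y > 0}`. -/
def Omega : Set (ℝ × ℝ × ℝ) := {p | 0 < p.1 ∧ 0 < p.2.1}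

/-- The Longstaff–Schwartz (Kolmogorov backward) equation
`u_t = −((a−bx)·u_x + (d−ey)·u_y + (x/2)·u_xx + (y/2)·u_yy)` holds at the point `(x,y,t)`. -/
def LSEq (a b d e : ℝ) (u : ℝ → ℝ → ℝ → ℝ) (x y t : ℝ) : Prop :=
  pdT u x y t =
    -((a - b * x) * pdX u x y t + (d - e * y) * pdY u x y t +
      x / 2 * pdXX u x y t + y / 2 * pdYY u x y t)

/-- `u` is a solution of the Longstaff–Schwartz equation on `Ω`: it is C² on `Ω` and
satisfies the equation at every point of `Ω`. -/
def IsLSSolution (a b d e : ℝ) (u : ℝ → ℝ → ℝ → ℝ) : Prop :=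
  ContDiffOn ℝ 2 (fun p : ℝ × ℝ × ℝ => u p.1 p.2.1 p.2.2) Omega ∧
  ∀ x y t : ℝ, 0 < x → 0 < y → LSEq a b d e u x y t

lemma omega_isOpen : IsOpen Omega := by
  have : Omega = {p : ℝ × ℝ × ℝ | 0 < p.1} ∩ {p | 0 < p.2.1} := rfl
  rw [this]
  exact (isOpen_lt continuous_const continuous_fst).inter
    (isOpen_lt continuous_const (continuous_fst.comp continuous_snd))

section helpers
variable {u : ℝ → ℝ → ℝ → ℝ}
  (hU : ContDiffOn ℝ 2 (fun p : ℝ × ℝ × ℝ => u p.1 p.2.1 p.2.2) Omega)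

include hU

lemma diffAt_U {x w t : ℝ} (hx : 0 < x) (hw : 0 < w) :
    DifferentiableAt ℝ (fun p : ℝ × ℝ × ℝ => u p.1 p.2.1 p.2.2) (x, w, t) :=
  (hU.contDiffAt (omega_isOpen.mem_nhds ⟨hx, hw⟩)).differentiableAt (by norm_num)

lemma pdY_hasDerivAt {x w t : ℝ} (hx : 0 < x) (hw : 0 < w) :
    HasDerivAt (fun z => u x z t) (pdY u x w t) w := by
  have hpath : HasDerivAt (fun z : ℝ => ((x, z, t) : ℝ × ℝ × ℝ)) (0, 1, 0) w :=
    HasDerivAt.prodMk (hasDerivAt_const w x) ((hasDerivAt_id w).prodMk (hasDerivAt_const w t))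
  have h := (diffAt_U hU hx hw).hasFDerivAt.comp_hasDerivAt w hpath
  have hd : DifferentiableAt ℝ (fun z => u x z t) w := h.differentiableAt
  exact hd.hasDerivAt

lemma pdY_eq_fderiv {x w t : ℝ} (hx : 0 < x) (hw : 0 < w) :
    pdY u x w t = fderiv ℝ (fun p : ℝ × ℝ × ℝ => u p.1 p.2.1 p.2.2) (x, w, t) (0, 1, 0) := by
  have hpath : HasDerivAt (fun z : ℝ => ((x, z, t) : ℝ × ℝ × ℝ)) (0, 1, 0) w :=
    HasDerivAt.prodMk (hasDerivAt_const w x) ((hasDerivAt_id w).prodMk (hasDerivAt_const w t))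
  have h := (diffAt_U hU hx hw).hasFDerivAt.comp_hasDerivAt w hpath
  exact h.deriv

lemma pdT_eq_fderiv {x w t : ℝ} (hx : 0 < x) (hw : 0 < w) :
    pdT u x w t = fderiv ℝ (fun p : ℝ × ℝ × ℝ => u p.1 p.2.1 p.2.2) (x, w, t) (0, 0, 1) := by
  have hpath : HasDerivAt (fun z : ℝ => ((x, w, z) : ℝ × ℝ × ℝ)) (0, 0, 1) t :=
    HasDerivAt.prodMk (hasDerivAt_const t x) (HasDerivAt.prodMk (hasDerivAt_const t w) (hasDerivAt_id t))
  have h := (diffAt_U hU hx hw).hasFDerivAt.comp_hasDerivAt t hpath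
  exact h.deriv

lemma hasDerivAt_uYT {x w t : ℝ} (hx : 0 < x) (hw : 0 < w) {f : ℝ → ℝ} {f' : ℝ}
    (hf : HasDerivAt f f' t) (hft : f t = w) :
    HasDerivAt (fun z => u x (f z) z) (pdY u x w t * f' + pdT u x w t) t := by
  have hpath : HasDerivAt (fun z : ℝ => ((x, f z, z) : ℝ × ℝ × ℝ)) (0, f', 1) t :=
    HasDerivAt.prodMk (hasDerivAt_const t x) (hf.prodMk (hasDerivAt_id t))
  have hd := diffAt_U hU (t := t) hx hw
  have h := hd.hasFDerivAt.comp_hasDerivAt_of_eq t hpath (by simp [hft])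
  have hval : fderiv ℝ (fun p : ℝ × ℝ × ℝ => u p.1 p.2.1 p.2.2) (x, w, t) ((0:ℝ), f', (1:ℝ))
      = pdY u x w t * f' + pdT u x w t := by
    have hsplit : ((0:ℝ), f', (1:ℝ)) = f' • ((0:ℝ), (1:ℝ), (0:ℝ)) + ((0:ℝ), (0:ℝ), (1:ℝ)) := by
      simp [Prod.ext_iff]
    rw [hsplit, map_add, map_smul, pdY_eq_fderiv hU hx hw, pdT_eq_fderiv hU hx hw]
    simp [mul_comm]
  exact hval ▸ h

lemma pdYY_hasDerivAt {x w t : ℝ} (hx : 0 < x) (hw : 0 < w) :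
    HasDerivAt (fun z => pdY u x z t) (pdYY u x w t) w := by
  set U : ℝ × ℝ × ℝ → ℝ := fun p => u p.1 p.2.1 p.2.2 with hUdef
  have hca : ContDiffAt ℝ 2 U (x, w, t) :=
    hU.contDiffAt (omega_isOpen.mem_nhds ⟨hx, hw⟩)
  have hfd : ContDiffAt ℝ 1 (fderiv ℝ U) (x, w, t) :=
    hca.fderiv_right (by norm_num)
  have hg : ContDiffAt ℝ 1 (fun p => fderiv ℝ U p ((0:ℝ), (1:ℝ), (0:ℝ))) (x, w, t) :=
    hfd.clm_apply contDiffAt_const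
  have hgd : DifferentiableAt ℝ (fun p => fderiv ℝ U p ((0:ℝ), (1:ℝ), (0:ℝ))) (x, w, t) :=
    hg.differentiableAt one_ne_zero
  have hpath : HasDerivAt (fun z : ℝ => ((x, z, t) : ℝ × ℝ × ℝ)) (0, 1, 0) w :=
    HasDerivAt.prodMk (hasDerivAt_const w x) ((hasDerivAt_id w).prodMk (hasDerivAt_const w t))
  have hslice := hgd.hasFDerivAt.comp_hasDerivAt w hpath
  have hev : (fun z => pdY u x z t) =ᶠ[nhds w]
      (fun z => fderiv ℝ U (x, z, t) ((0:ℝ), (1:ℝ), (0:ℝ))) := by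
    filter_upwards [Ioi_mem_nhds hw] with z hz
    exact pdY_eq_fderiv hU hx hz
  have h2 : HasDerivAt (fun z => pdY u x z t) _ w := hslice.congr_of_eventuallyEq hev
  exact h2.differentiableAt.hasDerivAt

end helpers

/-- Symmetry of the Longstaff–Schwartz equation when `d = 1/4` and `e = 0`
(subcase 4.4, group `G₄`). -/
theorem ls_symmetry_d_quarter_e_zero (a b d e : ℝ) (hd : d = 1 / 4) (he : e = 0)
    (u : ℝ → ℝ → ℝ → ℝ) (hu : IsLSSolution a b d e u) (ε : ℝ) :
    ∀ x y t : ℝ, 0 < x → 0 < y → 2 * Real.sqrt y > t * ε →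
      LSEq a b d e
        (fun x y t =>
          Real.exp (ε * (4 * Real.sqrt y - t * ε) / 2) *
            u x ((2 * Real.sqrt y - t * ε) ^ 2 / 4) t)
        x y t := by
  obtain ⟨hU, heq⟩ := hu
  subst hd he
  intro x y t hx hy hst
  have hr : 0 < Real.sqrt y := Real.sqrt_pos.mpr hy
  have hs0 : 0 < 2 * Real.sqrt y - t * ε := by linarith
  have hY : 0 < (2 * Real.sqrt y - t * ε) ^ 2 / 4 := by positivity
  -- first x-derivative
  have hpdX : pdX (fun x y t =>
        Real.exp (ε * (4 * Real.sqrt y - t * ε) / 2) *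
          u x ((2 * Real.sqrt y - t * ε) ^ 2 / 4) t) x y t
      = Real.exp (ε * (4 * Real.sqrt y - t * ε) / 2) *
          pdX u x ((2 * Real.sqrt y - t * ε) ^ 2 / 4) t := by
    simp only [pdX]
    exact deriv_const_mul_field _
  -- second x-derivative
  have hfunX : (fun z => pdX (fun x y t =>
        Real.exp (ε * (4 * Real.sqrt y - t * ε) / 2) *
          u x ((2 * Real.sqrt y - t * ε) ^ 2 / 4) t) z y t)
      = fun z => Real.exp (ε * (4 * Real.sqrt y - t * ε) / 2) *
          pdX u z ((2 * Real.sqrt y - t * ε) ^ 2 / 4) t := by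
    funext z
    simp only [pdX]
    exact deriv_const_mul_field _
  have hpdXX : pdXX (fun x y t =>
        Real.exp (ε * (4 * Real.sqrt y - t * ε) / 2) *
          u x ((2 * Real.sqrt y - t * ε) ^ 2 / 4) t) x y t
      = Real.exp (ε * (4 * Real.sqrt y - t * ε) / 2) *
          pdXX u x ((2 * Real.sqrt y - t * ε) ^ 2 / 4) t := by
    simp only [pdXX]
    rw [hfunX]
    exact deriv_const_mul_field _
  -- t-derivative
  have hEt : HasDerivAt (fun z : ℝ => Real.exp (ε * (4 * Real.sqrt y - z * ε) / 2)) _ t :=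
    ((((hasDerivAt_const t (4 * Real.sqrt y)).sub
      ((hasDerivAt_id t).mul_const ε)).const_mul ε).div_const 2).exp
  have hft : HasDerivAt (fun z : ℝ => (2 * Real.sqrt y - z * ε) ^ 2 / 4) _ t :=
    (((hasDerivAt_const t (2 * Real.sqrt y)).sub ((hasDerivAt_id t).mul_const ε)).pow 2).div_const 4
  have hcompT : HasDerivAt (fun z : ℝ => u x ((2 * Real.sqrt y - z * ε) ^ 2 / 4) z) _ t :=
    hasDerivAt_uYT hU hx hY hft rfl
  have HDT : HasDerivAt (fun z : ℝ => Real.exp (ε * (4 * Real.sqrt y - z * ε) / 2) *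
      u x ((2 * Real.sqrt y - z * ε) ^ 2 / 4) z) _ t := hEt.mul hcompT
  have hpdT : pdT (fun x y t =>
        Real.exp (ε * (4 * Real.sqrt y - t * ε) / 2) *
          u x ((2 * Real.sqrt y - t * ε) ^ 2 / 4) t) x y t = _ := HDT.deriv
  -- y-derivative, at every point near y
  have hstep4 : ∀ v : ℝ, 0 < v → t * ε < 2 * Real.sqrt v →
      pdY (fun x y t =>
        Real.exp (ε * (4 * Real.sqrt y - t * ε) / 2) *
          u x ((2 * Real.sqrt y - t * ε) ^ 2 / 4) t) x v t
      = Real.exp (ε * (4 * Real.sqrt v - t * ε) / 2) *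
          ((ε / Real.sqrt v) * u x ((2 * Real.sqrt v - t * ε) ^ 2 / 4) t +
            pdY u x ((2 * Real.sqrt v - t * ε) ^ 2 / 4) t *
              ((2 * Real.sqrt v - t * ε) / (2 * Real.sqrt v))) := by
    intro v hv hsv
    have hrv : 0 < Real.sqrt v := Real.sqrt_pos.mpr hv
    have hYv : 0 < (2 * Real.sqrt v - t * ε) ^ 2 / 4 := by
      have : 0 < 2 * Real.sqrt v - t * ε := by linarith
      positivity
    have hsq : HasDerivAt (fun z : ℝ => Real.sqrt z) (1 / (2 * Real.sqrt v)) v :=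
      Real.hasDerivAt_sqrt hv.ne'
    have hsz : HasDerivAt (fun z : ℝ => 2 * Real.sqrt z - t * ε) _ v :=
      (hsq.const_mul 2).sub_const (t * ε)
    have hYz : HasDerivAt (fun z : ℝ => (2 * Real.sqrt z - t * ε) ^ 2 / 4) _ v :=
      (hsz.pow 2).div_const 4
    have hEz : HasDerivAt (fun z : ℝ => Real.exp (ε * (4 * Real.sqrt z - t * ε) / 2)) _ v :=
      ((((hsq.const_mul 4).sub_const (t * ε)).const_mul ε).div_const 2).exp
    have hcomp : HasDerivAt (fun z : ℝ => u x ((2 * Real.sqrt z - t * ε) ^ 2 / 4) t) _ v :=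
      (pdY_hasDerivAt hU (t := t) hx hYv).comp v (h := fun z : ℝ => (2 * Real.sqrt z - t * ε) ^ 2 / 4) hYz
    have HD : HasDerivAt (fun z : ℝ => Real.exp (ε * (4 * Real.sqrt z - t * ε) / 2) *
        u x ((2 * Real.sqrt z - t * ε) ^ 2 / 4) t) _ v := hEz.mul hcomp
    have h1 : pdY (fun x y t =>
        Real.exp (ε * (4 * Real.sqrt y - t * ε) / 2) *
          u x ((2 * Real.sqrt y - t * ε) ^ 2 / 4) t) x v t = _ := HD.deriv
    rw [h1]
    have hne : Real.sqrt v ≠ 0 := ne_of_gt hrv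
    field_simp
    ring
  -- the y-derivative at y itself
  have hpdY := hstep4 y hy hst
  -- second y-derivative
  have hmem : {z : ℝ | 0 < z ∧ t * ε < 2 * Real.sqrt z} ∈ nhds y := by
    have ho : IsOpen {z : ℝ | 0 < z ∧ t * ε < 2 * Real.sqrt z} :=
      (isOpen_lt continuous_const continuous_id).inter
        (isOpen_lt continuous_const (continuous_const.mul Real.continuous_sqrt))
    exact ho.mem_nhds ⟨hy, hst⟩
  have hev : (fun z => pdY (fun x y t =>
        Real.exp (ε * (4 * Real.sqrt y - t * ε) / 2) *
          u x ((2 * Real.sqrt y - t * ε) ^ 2 / 4) t) x z t)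
      =ᶠ[nhds y] (fun z => Real.exp (ε * (4 * Real.sqrt z - t * ε) / 2) *
          ((ε / Real.sqrt z) * u x ((2 * Real.sqrt z - t * ε) ^ 2 / 4) t +
            pdY u x ((2 * Real.sqrt z - t * ε) ^ 2 / 4) t *
              ((2 * Real.sqrt z - t * ε) / (2 * Real.sqrt z)))) := by
    filter_upwards [hmem] with z hz
    exact hstep4 z hz.1 hz.2
  have hsqy : HasDerivAt (fun z : ℝ => Real.sqrt z) (1 / (2 * Real.sqrt y)) y :=
    Real.hasDerivAt_sqrt hy.ne'
  have hszy : HasDerivAt (fun z : ℝ => 2 * Real.sqrt z - t * ε) _ y :=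
    (hsqy.const_mul 2).sub_const (t * ε)
  have hYzy : HasDerivAt (fun z : ℝ => (2 * Real.sqrt z - t * ε) ^ 2 / 4) _ y :=
    (hszy.pow 2).div_const 4
  have hEzy : HasDerivAt (fun z : ℝ => Real.exp (ε * (4 * Real.sqrt z - t * ε) / 2)) _ y :=
    ((((hsqy.const_mul 4).sub_const (t * ε)).const_mul ε).div_const 2).exp
  have hinv : HasDerivAt (fun z : ℝ => ε / Real.sqrt z) _ y :=
    (hasDerivAt_const y ε).div hsqy (ne_of_gt hr)
  have hu0 : HasDerivAt (fun z : ℝ => u x ((2 * Real.sqrt z - t * ε) ^ 2 / 4) t) _ y :=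
    (pdY_hasDerivAt hU (t := t) hx hY).comp y (h := fun z : ℝ => (2 * Real.sqrt z - t * ε) ^ 2 / 4) hYzy
  have hpy : HasDerivAt (fun z : ℝ => pdY u x ((2 * Real.sqrt z - t * ε) ^ 2 / 4) t) _ y :=
    (pdYY_hasDerivAt hU hx hY).comp y hYzy
  have hq : HasDerivAt (fun z : ℝ => (2 * Real.sqrt z - t * ε) / (2 * Real.sqrt z)) _ y :=
    hszy.div (hsqy.const_mul 2) (mul_ne_zero two_ne_zero (ne_of_gt hr))
  have HDF : HasDerivAt (fun z : ℝ => Real.exp (ε * (4 * Real.sqrt z - t * ε) / 2) *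
      ((ε / Real.sqrt z) * u x ((2 * Real.sqrt z - t * ε) ^ 2 / 4) t +
        pdY u x ((2 * Real.sqrt z - t * ε) ^ 2 / 4) t *
          ((2 * Real.sqrt z - t * ε) / (2 * Real.sqrt z)))) _ y :=
    hEzy.mul ((hinv.mul hu0).add (hpy.mul hq))
  have hpdYY : pdYY (fun x y t =>
        Real.exp (ε * (4 * Real.sqrt y - t * ε) / 2) *
          u x ((2 * Real.sqrt y - t * ε) ^ 2 / 4) t) x y t = _ :=
    (hev.deriv_eq).trans HDF.deriv
  -- use the equation for u at (x, Y, t)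
  have hueq := heq x ((2 * Real.sqrt y - t * ε) ^ 2 / 4) t hx hY
  simp only [LSEq] at hueq ⊢
  rw [hpdT, hpdX, hpdXX, hpdY, hpdYY, hueq]
  have h2 : Real.sqrt y ^ 2 = y := Real.sq_sqrt hy.le
  obtain ⟨r, hrg⟩ : ∃ r, Real.sqrt y = r := ⟨_, rfl⟩
  rw [hrg] at h2 hr ⊢
  rw [← h2]
  have hrne : r ≠ 0 := ne_of_gt hr
  simp only [Pi.sub_apply, id]
  field_simp
  ring
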